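/- Let p ≥ 5 be a real number and λ ∈ (0, π²/4]. If u ∈ C²([0,1]) satisfies u''(r) + (2/r) u'(r) + λ u(r) + u(r)|u(r)|^{p-1} = 0 for 0 < r < 1, with u'(0) = u(1) = 0, then u ≡ 0 on [0,1]. -/

import Mathlib

open Set Real

noncomputable def BNDfun (p μ : ℝ) (u u' : ℝ → ℝ) (r : ℝ) : ℝ :=
  sin (2*μ*r)/(2*μ) * (u r + r * u' r)^2/2
  - cos (2*μ*r) * (r * u r) * (u r + r * u' r)/2
  - 2*μ * sin (2*μ*r) * (r * u r)^2/4
  + μ^2 * (sin (2*μ*r)/(2*μ)) * (r * u r)^2/2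
  + sin (2*μ*r)/(2*μ) * r^2 * ((u r)^2)^((p+1)/2)/(p+1)

noncomputable def BNKfun (p μ r : ℝ) : ℝ :=
  (p+3)*r*cos (2*μ*r) - (p-1)*sin (2*μ*r)/μ

lemma BNsplit (p x : ℝ) (hp : 5 ≤ p) :
    (x^2)^((p+1)/2) = x^2 * (x^2)^((p-1)/2) := by
  rcases eq_or_ne x 0 with h | h
  · simp [h, Real.zero_rpow (by positivity : ((p:ℝ)+1)/2 ≠ 0)]
  · have hx2 : (0:ℝ) < x^2 := by positivity
    rw [show (p+1)/2 = (p-1)/2 + 1 by ring, Real.rpow_add hx2, Real.rpow_one]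
    ring

lemma BNabs (p x : ℝ) : |x| ^ (p-1) = (x^2) ^ ((p-1)/2) := by
  rw [show (x^2 : ℝ) = |x| ^ (2:ℕ) from (sq_abs x).symm,
      ← Real.rpow_natCast |x| 2, ← Real.rpow_mul (abs_nonneg x)]
  norm_num
  rw [show (2:ℝ)*((p-1)/2) = p-1 by ring]

lemma BNDfun_deriv (p μ : ℝ) (hp : 5 ≤ p) (hμ : 0 < μ) (u u' u'' : ℝ → ℝ) (r : ℝ)
    (hr0 : 0 < r)
    (h1 : HasDerivAt u (u' r) r) (h2 : HasDerivAt u' (u'' r) r)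
    (hode : u'' r = -(2/r*u' r) - μ^2*u r - u r*((u r)^2)^((p-1)/2)) :
    HasDerivAt (BNDfun p μ u u')
      ((u r)^2 * ((u r)^2)^((p-1)/2) * (r/(2*(p+1))) * BNKfun p μ r) r := by
  have hlin : HasDerivAt (fun x : ℝ => 2*μ*x) (2*μ) r := by
    simpa using (hasDerivAt_id r).const_mul (2*μ)
  have hs : HasDerivAt (fun x : ℝ => sin (2*μ*x)) (cos (2*μ*r) * (2*μ)) r := by
    simpa [Function.comp_def] using (Real.hasDerivAt_sin (2*μ*r)).comp r hlin
  have hc : HasDerivAt (fun x : ℝ => cos (2*μ*x)) (-sin (2*μ*r) * (2*μ)) r := by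
    simpa [Function.comp_def] using (Real.hasDerivAt_cos (2*μ*r)).comp r hlin
  have hv : HasDerivAt (fun y : ℝ => y * u y) (1 * u r + r * u' r) r :=
    (hasDerivAt_id r).mul h1
  have hw : HasDerivAt (fun y : ℝ => u y + y * u' y) (u' r + (1 * u' r + r * u'' r)) r :=
    h1.add ((hasDerivAt_id r).mul h2)
  have hF : HasDerivAt (fun y : ℝ => ((u y)^2)^((p+1)/2))
      ((p+1)/2 * ((u r)^2)^((p+1)/2 - 1) * ((2:ℕ) * u r ^ (2-1) * u' r)) r := by
    simpa [Function.comp_def, Pi.pow_apply] using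
      (Real.hasDerivAt_rpow_const (x := (u r)^2) (p := (p+1)/2)
        (Or.inr (by linarith))).comp r (h1.pow 2)
  have E1 := ((hs.div_const (2*μ)).mul (hw.pow 2)).div_const 2
  have E2 := ((hc.mul hv).mul hw).div_const 2
  have E3 := ((hs.const_mul (2*μ)).mul (hv.pow 2)).div_const 4
  have E4 := (((hs.div_const (2*μ)).const_mul (μ^2)).mul (hv.pow 2)).div_const 2
  have E5 := (((hs.div_const (2*μ)).mul (hasDerivAt_pow 2 r)).mul hF).div_const (p+1)
  have hbig := (((E1.sub E2).sub E3).add E4).add E5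
  unfold BNDfun
  convert hbig using 1
  · rfl
  · rfl
  · rfl
  rw [hode, show (p+1)/2 - 1 = (p-1)/2 by ring, BNsplit p (u r) hp]
  unfold BNKfun
  have hne : (2*μ) ≠ 0 := by positivity
  have hpne : (p+1) ≠ 0 := by linarith
  simp only [Pi.pow_apply, Pi.mul_apply]
  field_simp
  ring

lemma BNKfun_neg (p μ r : ℝ) (hp : 5 ≤ p) (hμ : 0 < μ) (h2μπ : 2*μ ≤ π)
    (hr0 : 0 < r) (hr1 : r < 1) : BNKfun p μ r < 0 := by
  unfold BNKfun
  have hθ0 : 0 < 2*μ*r := by positivity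
  have hθπ : 2*μ*r < π := by nlinarith
  have hsin : 0 < Real.sin (2*μ*r) := Real.sin_pos_of_pos_of_lt_pi hθ0 hθπ
  rw [sub_neg, lt_div_iff₀ hμ]
  rcases le_or_gt (Real.cos (2*μ*r)) 0 with h | h
  · have h1 : (p+3)*r*Real.cos (2*μ*r) ≤ 0 := by
      apply mul_nonpos_of_nonneg_of_nonpos (by nlinarith) h
    nlinarith
  · have hθ2 : 2*μ*r < π/2 := by
      by_contra h'
      push_neg at h'
      have := Real.cos_nonpos_of_pi_div_two_le_of_le h' (by linarith)
      linarith
    have htan := Real.lt_tan hθ0 hθ2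
    rw [Real.tan_eq_sin_div_cos, lt_div_iff₀ h] at htan
    nlinarith [mul_lt_mul_of_pos_left htan (show (0:ℝ) < (p+3)/2 by linarith),
      mul_nonneg hsin.le (show (0:ℝ) ≤ (p-5)/2 by linarith)]

/-- Non-existence (Example 1): for `p ≥ 5` and `λ ∈ (0, π²/4]`, the problem
`u'' + (2/r)u' + λu + u|u|^{p-1} = 0` on `(0,1)`, `u'(0) = u(1) = 0`,
has no non-trivial C² solution. -/
theorem brezis_nirenberg_nonexistence
    (p : ℝ) (hp : 5 ≤ p) (lam : ℝ) (hlam : lam ∈ Ioc (0:ℝ) (π ^ 2 / 4))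
    (u u' u'' : ℝ → ℝ)
    (hu : ∀ r ∈ Icc (0:ℝ) 1, HasDerivAt u (u' r) r)
    (hu' : ∀ r ∈ Icc (0:ℝ) 1, HasDerivAt u' (u'' r) r)
    (hu''c : ContinuousOn u'' (Icc (0:ℝ) 1))
    (hode : ∀ r ∈ Ioo (0:ℝ) 1,
      u'' r + 2 / r * u' r + lam * u r + u r * |u r| ^ (p - 1) = 0)
    (hbc0 : u' 0 = 0) (hbc1 : u 1 = 0) :
    ∀ r ∈ Icc (0:ℝ) 1, u r = 0 := by
  obtain ⟨hlam0, hlam1⟩ := hlam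
  set μ := Real.sqrt lam with hμdef
  have hμ0 : 0 < μ := Real.sqrt_pos.2 hlam0
  have hμ2 : μ ^ 2 = lam := Real.sq_sqrt hlam0.le
  have hπ0 : 0 < π := Real.pi_pos
  have h2μπ : 2 * μ ≤ π := by nlinarith [hμ2]
  -- the key derivative computation
  have key : ∀ r ∈ Ioo (0:ℝ) 1, HasDerivAt (BNDfun p μ u u')
      ((u r)^2 * ((u r)^2)^((p-1)/2) * (r/(2*(p+1))) * BNKfun p μ r) r := by
    intro r hr
    have hrI : r ∈ Icc (0:ℝ) 1 := ⟨hr.1.le, hr.2.le⟩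
    refine BNDfun_deriv p μ hp hμ0 u u' u'' r hr.1 (hu r hrI) (hu' r hrI) ?_
    have h0 := hode r hr
    rw [BNabs p (u r), ← hμ2] at h0
    linarith
  -- continuity of D on [0,1]
  have hDc : ContinuousOn (BNDfun p μ u u') (Icc 0 1) := by
    intro r hr
    have h1 := (hu r hr).continuousAt
    have h2 := (hu' r hr).continuousAt
    have hsc : ContinuousAt (fun x : ℝ => sin (2*μ*x)) r :=
      (Real.continuous_sin.comp (continuous_const.mul continuous_id)).continuousAt
    have hcc : ContinuousAt (fun x : ℝ => cos (2*μ*x)) r :=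
      (Real.continuous_cos.comp (continuous_const.mul continuous_id)).continuousAt
    have hF : ContinuousAt (fun x : ℝ => ((u x)^2)^((p+1)/2)) r :=
      (Real.continuousAt_rpow_const _ _ (Or.inr (by positivity))).comp (h1.pow 2)
    have hid : ContinuousAt (fun x : ℝ => x) r := continuousAt_id
    exact ((((((hsc.div_const _).mul ((h1.add (hid.mul h2)).pow 2)).div_const _).sub
      (((hcc.mul (hid.mul h1)).mul (h1.add (hid.mul h2))).div_const _)).sub
      (((hsc.const_mul _).mul ((hid.mul h1).pow 2)).div_const _)).add
      ((((hsc.div_const _).const_mul _).mul ((hid.mul h1).pow 2)).div_const _)).add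
      ((((hsc.div_const _).mul (hid.pow 2)).mul hF).div_const _)
      |>.continuousWithinAt
  -- D is antitone on [0,1]
  have hanti : AntitoneOn (BNDfun p μ u u') (Icc 0 1) := by
    apply antitoneOn_of_deriv_nonpos (convex_Icc 0 1) hDc
    · rw [interior_Icc]
      exact fun x hx => (key x hx).differentiableAt.differentiableWithinAt
    · rw [interior_Icc]
      intro x hx
      rw [(key x hx).deriv]
      have hK := BNKfun_neg p μ x hp hμ0 h2μπ hx.1 hx.2
      have hQ : (0:ℝ) ≤ (u x)^2 * ((u x)^2)^((p-1)/2) * (x/(2*(p+1))) := by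
        have : (0:ℝ) ≤ ((u x)^2)^((p-1)/2) := Real.rpow_nonneg (by positivity) _
        have hx0 : (0:ℝ) ≤ x/(2*(p+1)) := by
          apply div_nonneg hx.1.le; linarith
        positivity
      exact mul_nonpos_of_nonneg_of_nonpos hQ hK.le
  -- D 0 = 0
  have hD0 : BNDfun p μ u u' 0 = 0 := by
    unfold BNDfun; norm_num
  -- D 1 ≥ 0
  have hD1 : 0 ≤ BNDfun p μ u u' 1 := by
    unfold BNDfun
    rw [hbc1]
    have hs1 : 0 ≤ Real.sin (2*μ) := Real.sin_nonneg_of_nonneg_of_le_pi (by positivity) h2μπ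
    have h0 : ((0:ℝ)^2)^((p+1)/2) = 0 := by
      simp [Real.zero_rpow (by positivity : ((p:ℝ)+1)/2 ≠ 0)]
    rw [mul_one, h0]
    have h2 := mul_nonneg (div_nonneg hs1 (by positivity : (0:ℝ) ≤ 2*μ))
      (sq_nonneg (u' 1))
    norm_num
    nlinarith [h2]
  -- D vanishes identically on [0,1]
  have hDzero : ∀ r ∈ Icc (0:ℝ) 1, BNDfun p μ u u' r = 0 := by
    intro r hr
    have ha := hanti (show (0:ℝ) ∈ Icc (0:ℝ) 1 by norm_num) hr hr.1
    have hb := hanti hr (show (1:ℝ) ∈ Icc (0:ℝ) 1 by norm_num) hr.2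
    linarith
  -- hence u = 0 on (0,1)
  have huIoo : ∀ r ∈ Ioo (0:ℝ) 1, u r = 0 := by
    intro r hr
    have hd1 : deriv (BNDfun p μ u u') r
        = (u r)^2 * ((u r)^2)^((p-1)/2) * (r/(2*(p+1))) * BNKfun p μ r :=
      (key r hr).deriv
    have hev : BNDfun p μ u u' =ᶠ[nhds r] fun _ => 0 :=
      Filter.eventuallyEq_of_mem (Icc_mem_nhds hr.1 hr.2) hDzero
    have hd2 : deriv (BNDfun p μ u u') r = 0 := by
      rw [hev.deriv_eq]; simp
    by_contra hne
    have hK := BNKfun_neg p μ r hp hμ0 h2μπ hr.1 hr.2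
    have hQ : (0:ℝ) < (u r)^2 * ((u r)^2)^((p-1)/2) * (r/(2*(p+1))) := by
      have h1 : (0:ℝ) < (u r)^2 := by positivity
      have h2 : (0:ℝ) < ((u r)^2)^((p-1)/2) := Real.rpow_pos_of_pos h1 _
      have h3 : (0:ℝ) < r/(2*(p+1)) := by
        apply div_pos hr.1; linarith
      positivity
    have := mul_neg_of_pos_of_neg hQ hK
    rw [hd1] at hd2
    linarith
  -- conclude on the closed interval
  intro r hr
  rcases eq_or_lt_of_le hr.2 with h1 | h1
  · rw [h1, hbc1]
  rcases eq_or_lt_of_le hr.1 with h0 | h0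
  swap
  · exact huIoo r ⟨h0, h1⟩
  · -- r = 0 : continuity
    subst h0
    have hc : ContinuousAt u 0 := (hu 0 (by norm_num)).continuousAt
    have hne : (nhdsWithin (0:ℝ) (Ioo (0:ℝ) 1)).NeBot := by
      apply mem_closure_iff_nhdsWithin_neBot.1
      rw [closure_Ioo (by norm_num : (0:ℝ) ≠ 1)]
      exact ⟨le_refl 0, zero_le_one⟩
    have ht1 : Filter.Tendsto u (nhdsWithin (0:ℝ) (Ioo (0:ℝ) 1)) (nhds (u 0)) :=
      (hc.continuousWithinAt).tendsto
    have ht2 : Filter.Tendsto u (nhdsWithin (0:ℝ) (Ioo (0:ℝ) 1)) (nhds 0) := by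
      apply Filter.Tendsto.congr' _ tendsto_const_nhds
      filter_upwards [self_mem_nhdsWithin] with x hx
      exact (huIoo x hx).symm
    exact tendsto_nhds_unique ht1 ht2
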